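/- (Theorem 2, boundedness.) Assume h(τ) > 0, let q > 1, define ζ(t) := [h(τ)·ν(τ) + ∫_τ^t β(ξ)·ν(ξ) dξ]/ν(t) for t ≥ τ, and assume α(t)·σ(t)^p·(q·ζ(t))^p ≤ (q−1)·β(t) for all t ≥ τ. If additionally M := sup_{t ≥ τ} ∫_τ^t γ(ξ) dξ < ∞ and the improper integral ∫_τ^∞ β(ξ)·ν(ξ) dξ converges, then u is bounded on [−τ, ∞), i.e., sup_{t ≥ −τ} ‖u(t)‖ < ∞. -/

import Mathlib

open Real MeasureTheory Set Filter ComplexInnerProductSpace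

/-- `ν(t) = exp(−∫₀ᵗ γ(ξ) dξ)`. -/
noncomputable def nu (γ : ℝ → ℝ) (t : ℝ) : ℝ := Real.exp (-∫ ξ in (0:ℝ)..t, γ ξ)

/-- `σ(t) = exp(−∫_{t−τ}^t γ(ξ) dξ)`. -/
noncomputable def sig (γ : ℝ → ℝ) (τ t : ℝ) : ℝ :=
  Real.exp (-∫ ξ in (t - τ)..t, γ ξ)

/-- Theorem 2.7 (Theorem 2), boundedness: if moreover `sup_{t≥τ} ∫_τ^t γ < ∞` and `∫_τ^∞ β ν < ∞`, then `u` is bounded on `[−τ,∞)`. -/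
theorem stmt_13
    {H : Type*} [NormedAddCommGroup H] [InnerProductSpace ℂ H]
    (τ p : ℝ) (hτ : 0 < τ) (hp : 1 < p)
    (γ α β : ℝ → ℝ)
    (hγc : Continuous γ) (hαc : Continuous α) (hβc : Continuous β)
    (hα : ∀ t, 0 ≤ α t) (hβ : ∀ t, 0 ≤ β t)
    (u : ℝ → H) (u' : ℝ → H)
    (huc : ContinuousOn u (Ici (-τ)))
    (hud : ∀ t, 0 ≤ t → HasDerivWithinAt u (u' t) (Ici (0:ℝ)) t)
    (hnd : ∀ t, 0 ≤ t → DifferentiableWithinAt ℝ (fun s => ‖u s‖) (Ici (0:ℝ)) t)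
    (huineq : ∀ t, 0 ≤ t → (⟪u t, u' t⟫).re ≤
      γ t * ‖u t‖ ^ 2 + α t * ‖u t‖ * ‖u (t - τ)‖ ^ p + β t * ‖u t‖)
    (h h' : ℝ → ℝ)
    (hh0 : ∀ t, -τ ≤ t → 0 ≤ h t)
    (hhc : ContinuousOn h (Ici (-τ)))
    (hhd : ∀ t, 0 ≤ t → HasDerivWithinAt h (h' t) (Ici (0:ℝ)) t)
    (hheq : ∀ t, 0 ≤ t → h' t = γ t * h t + α t * h (t - τ) ^ p + β t)
    (hinit : ∀ t, -τ ≤ t → t ≤ 0 → h t = ‖u t‖)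
    (hhτ : 0 < h τ)
    (q : ℝ) (hq : 1 < q)
    (ζ : ℝ → ℝ)
    (hζ : ∀ t, τ ≤ t →
      ζ t = (h τ * nu γ τ + ∫ ξ in τ..t, β ξ * nu γ ξ) / nu γ t)
    (hcond : ∀ t, τ ≤ t → α t * sig γ τ t ^ p * (q * ζ t) ^ p ≤ (q - 1) * β t)
    (hM : BddAbove {x : ℝ | ∃ t, τ ≤ t ∧ x = ∫ ξ in τ..t, γ ξ})
    (hβν : IntegrableOn (fun ξ => β ξ * nu γ ξ) (Ici τ)) :
    ∃ B : ℝ, ∀ t, -τ ≤ t → ‖u t‖ ≤ B := by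
  have hτ0 : (0:ℝ) ≤ τ := hτ.le
  have hnupos : ∀ t, 0 < nu γ t := fun t => Real.exp_pos _
  have hnuderiv : ∀ t : ℝ, HasDerivAt (nu γ) (-γ t * nu γ t) t := by
    intro t
    have h1 : HasDerivAt (fun s => ∫ ξ in (0:ℝ)..s, γ ξ) (γ t) t :=
      intervalIntegral.integral_hasDerivAt_right (hγc.intervalIntegrable 0 t)
        (hγc.stronglyMeasurableAtFilter volume (nhds t)) hγc.continuousAt
    show HasDerivAt (fun s => Real.exp (-∫ ξ in (0:ℝ)..s, γ ξ)) (-γ t * nu γ t) t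
    simpa [nu, mul_comm] using (h1.neg).exp
  have hnucont : Continuous (nu γ) :=
    continuous_iff_continuousAt.2 fun t => (hnuderiv t).continuousAt
  set f' : ℝ → ℝ := fun t => derivWithin (fun s => ‖u s‖) (Ici (0:ℝ)) t with hf'def
  have hfd : ∀ x, 0 ≤ x → HasDerivWithinAt (fun s => ‖u s‖) (f' x) (Ici (0:ℝ)) x :=
    fun x hx => (hnd x hx).hasDerivWithinAt
  -- Step 1: pointwise derivative inequality
  have key : ∀ x, 0 ≤ x → ‖u x‖ * f' x ≤
      γ x * ‖u x‖ ^ 2 + α x * ‖u x‖ * ‖u (x - τ)‖ ^ p + β x * ‖u x‖ := by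
    intro x hx
    letI : InnerProductSpace ℝ H := InnerProductSpace.complexToReal
    have hsq : HasDerivWithinAt (fun s => ‖u s‖ ^ 2) (2 * (⟪u x, u' x⟫).re) (Ici (0:ℝ)) x := by
      have h1 := ((hud x hx).inner ℝ (hud x hx) :
        HasDerivWithinAt (fun t => (inner ℝ (u t) (u t) : ℝ)) _ _ _)
      have h2 : (fun t => (inner ℝ (u t) (u t) : ℝ)) = fun t => ‖u t‖ ^ 2 := by
        funext t; exact real_inner_self_eq_norm_sq _
      rw [h2] at h1
      refine h1.congr_deriv (Eq.symm ?_)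
      rw [real_inner_comm (u' x) (u x), real_inner_eq_re_inner ℂ]
      ring_nf
      simp only [RCLike.re_to_complex]
      rw [← Complex.conj_re (inner ℂ (u' x) (u x)), inner_conj_symm]
    have hsq2 : HasDerivWithinAt (fun s => ‖u s‖ ^ 2) (2 * ‖u x‖ * f' x) (Ici (0:ℝ)) x := by
      have := ((hfd x hx).pow 2 : HasDerivWithinAt (fun s => ‖u s‖ ^ 2) _ _ _)
      refine this.congr_deriv (Eq.symm ?_)
      push_cast
      ring
    have hU : UniqueDiffWithinAt ℝ (Ici (0:ℝ)) x := (uniqueDiffOn_Ici 0) x (mem_Ici.2 hx)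
    have e1 := hsq.derivWithin hU
    have e2 := hsq2.derivWithin hU
    have e3 : ‖u x‖ * f' x = (⟪u x, u' x⟫).re := by
      rw [e1] at e2; linarith
    rw [e3]
    exact huineq x hx
  -- Step 2: comparison ‖u t‖ ≤ h t
  have comp : ∀ t, -τ ≤ t → ‖u t‖ ≤ h t := by
    have main : ∀ n : ℕ, ∀ t, -τ ≤ t → t ≤ (n : ℝ) * τ → ‖u t‖ ≤ h t := by
      intro n
      induction n with
      | zero =>
        intro t ht0 ht1
        push_cast at ht1
        simp only [zero_mul] at ht1
        exact le_of_eq (hinit t ht0 ht1).symm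
      | succ n ih =>
        intro t ht0 ht1
        push_cast at ht1
        rcases le_or_gt t ((n : ℝ) * τ) with hc | hc
        · exact ih t ht0 hc
        · set a : ℝ := (n : ℝ) * τ with ha_def
          set b : ℝ := ((n : ℝ) + 1) * τ with hb_def
          have ha0 : 0 ≤ a := by positivity
          have hab : a ≤ b := by nlinarith
          obtain ⟨xm, hxm, hxmax⟩ := isCompact_Icc.exists_isMaxOn
            (nonempty_Icc.2 hab) (hγc.continuousOn : ContinuousOn γ (Icc a b))
          set C : ℝ := γ xm + 1 with hC_def
          have hC : ∀ x ∈ Icc a b, γ x < C := fun x hx =>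
            lt_of_le_of_lt (hxmax hx) (lt_add_one _)
          have hεb : ∀ ε : ℝ, 0 < ε → ∀ x ∈ Icc a b,
              ‖u x‖ ≤ h x + ε * Real.exp (C * (x - a)) := by
            intro ε hε
            have hBd : ∀ x : ℝ, HasDerivAt (fun t => ε * Real.exp (C * (t - a)))
                (ε * (C * Real.exp (C * (x - a)))) x := by
              intro x
              have := (((hasDerivAt_id x).sub_const a).const_mul C).exp.const_mul ε
              simp only [id_eq, mul_one] at this
              refine this.congr_deriv (Eq.symm ?_)
              ring
            refine image_le_of_deriv_right_lt_deriv_boundary' (f' := f')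
              (B := fun t => h t + ε * Real.exp (C * (t - a)))
              (B' := fun x => h' x + ε * (C * Real.exp (C * (x - a)))) ?_ ?_ ?_ ?_ ?_ ?_
            · exact (huc.norm).mono (fun x hx => le_trans (neg_nonpos.2 hτ0) (le_trans ha0 hx.1))
            · intro x hx
              have hx0 : 0 ≤ x := le_trans ha0 hx.1
              exact (hfd x hx0).mono (Ici_subset_Ici.mpr hx0)
            · have hfa : ‖u a‖ ≤ h a := ih a (le_trans (neg_nonpos.2 hτ0) ha0) le_rfl
              have hpos : (0:ℝ) < ε * Real.exp (C * (a - a)) := by positivity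
              show ‖u a‖ ≤ h a + ε * Real.exp (C * (a - a))
              linarith
            · refine ((hhc.mono (fun x hx => le_trans (neg_nonpos.2 hτ0) (le_trans ha0 hx.1))).add
                ?_)
              exact (continuous_const.mul (Real.continuous_exp.comp
                (continuous_const.mul (continuous_id.sub continuous_const)))).continuousOn
            · intro x hx
              have hx0 : 0 ≤ x := le_trans ha0 hx.1
              exact ((hhd x hx0).mono (Ici_subset_Ici.mpr hx0)).add (hBd x).hasDerivWithinAt
            · intro x hx hfB
              have hx0 : 0 ≤ x := le_trans ha0 hx.1
              have hhx : 0 ≤ h x := hh0 x (le_trans (neg_nonpos.2 hτ0) hx0)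
              have hEpos : 0 < ε * Real.exp (C * (x - a)) := by positivity
              have hfB' : ‖u x‖ = h x + ε * Real.exp (C * (x - a)) := hfB
              have hfp : 0 < ‖u x‖ := by rw [hfB']; linarith
              have h1 := key x hx0
              have h2 : f' x ≤ γ x * ‖u x‖ + α x * ‖u (x - τ)‖ ^ p + β x := by
                have h3 : ‖u x‖ * f' x ≤
                    ‖u x‖ * (γ x * ‖u x‖ + α x * ‖u (x - τ)‖ ^ p + β x) := by
                  nlinarith [h1]
                exact le_of_mul_le_mul_left h3 hfp
              have h4 : ‖u (x - τ)‖ ^ p ≤ h (x - τ) ^ p := by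
                refine Real.rpow_le_rpow (norm_nonneg _) ?_ (by linarith)
                refine ih (x - τ) (by linarith [hx.1]) (by linarith [hx.2])
              have h5 : f' x ≤ γ x * ‖u x‖ + α x * h (x - τ) ^ p + β x := by
                have := mul_le_mul_of_nonneg_left h4 (hα x)
                linarith
              have h6 : γ x * ‖u x‖ = γ x * h x + γ x * (ε * Real.exp (C * (x - a))) := by
                rw [hfB']; ring
              have h7 : f' x ≤ h' x + γ x * (ε * Real.exp (C * (x - a))) := by
                rw [hheq x hx0]; linarith
              have h8 : γ x * (ε * Real.exp (C * (x - a))) <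
                  C * (ε * Real.exp (C * (x - a))) := by
                exact mul_lt_mul_of_pos_right (hC x ⟨hx.1, hx.2.le⟩) hEpos
              calc f' x ≤ h' x + γ x * (ε * Real.exp (C * (x - a))) := h7
                _ < h' x + C * (ε * Real.exp (C * (x - a))) := by linarith
                _ = h' x + ε * (C * Real.exp (C * (x - a))) := by ring
          have htb : t ∈ Icc a b := ⟨hc.le, ht1⟩
          refine le_of_forall_pos_le_add ?_
          intro δ hδ
          have hE : (0:ℝ) < Real.exp (C * (t - a)) := Real.exp_pos _
          have := hεb (δ / Real.exp (C * (t - a))) (by positivity) t htb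
          calc ‖u t‖ ≤ h t + δ / Real.exp (C * (t - a)) * Real.exp (C * (t - a)) := this
            _ = h t + δ := by rw [div_mul_cancel₀ _ (ne_of_gt hE)]
    intro t ht
    obtain ⟨n, hn⟩ := exists_nat_ge (t / τ)
    exact main n t ht ((div_le_iff₀ hτ).mp hn)
  -- Step 3: w = h * ν is monotone on [0, ∞)
  have hwd : ∀ x, 0 ≤ x → HasDerivWithinAt (fun t => h t * nu γ t)
      (nu γ x * (α x * h (x - τ) ^ p + β x)) (Ici (0:ℝ)) x := by
    intro x hx
    have := ((hhd x hx).mul ((hnuderiv x).hasDerivWithinAt) :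
      HasDerivWithinAt (fun t => h t * nu γ t) _ _ _)
    refine this.congr_deriv (Eq.symm ?_)
    rw [hheq x hx]; ring
  have hwc : ContinuousOn (fun t => h t * nu γ t) (Ici (-τ)) := hhc.mul hnucont.continuousOn
  have hwmono : MonotoneOn (fun t => h t * nu γ t) (Ici (0:ℝ)) := by
    refine monotoneOn_of_deriv_nonneg (convex_Ici 0)
      (hwc.mono (fun x hx => le_trans (neg_nonpos.2 hτ0) hx)) ?_ ?_
    · intro x hx
      rw [interior_Ici] at hx
      exact ((hwd x hx.le).hasDerivAt (Ici_mem_nhds hx)).differentiableAt.differentiableWithinAt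
    · intro x hx
      rw [interior_Ici] at hx
      have hD := (hwd x hx.le).hasDerivAt (Ici_mem_nhds hx)
      rw [hD.deriv]
      have h1 : 0 ≤ h (x - τ) ^ p := Real.rpow_nonneg (hh0 _ (by linarith [hx.out])) p
      have := hα x; have := hβ x; have := (hnupos x).le
      positivity
  -- sigma identity
  have hsig : ∀ t : ℝ, sig γ τ t = nu γ t / nu γ (t - τ) := by
    intro t
    rw [sig, nu, nu, ← Real.exp_sub]
    congr 1
    have hadd : (∫ ξ in (0:ℝ)..(t - τ), γ ξ) + ∫ ξ in (t - τ)..t, γ ξ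
        = ∫ ξ in (0:ℝ)..t, γ ξ := intervalIntegral.integral_add_adjacent_intervals
      (hγc.intervalIntegrable 0 (t - τ)) (hγc.intervalIntegrable (t - τ) t)
    linarith
  have hsigpos : ∀ t : ℝ, 0 < sig γ τ t := fun t => Real.exp_pos _
  -- delayed value estimate
  have hστ : ∀ t, τ ≤ t → h (t - τ) ≤ sig γ τ t * h t := by
    intro t ht
    have h1 : h (t - τ) * nu γ (t - τ) ≤ h t * nu γ t :=
      hwmono (mem_Ici.2 (by linarith)) (mem_Ici.2 (by linarith)) (by linarith)
    rw [hsig t, div_mul_eq_mul_div, le_div_iff₀ (hnupos (t - τ))]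
    linarith [h1]
  -- Z and its derivative
  set Z : ℝ → ℝ := fun t => h τ * nu γ τ + ∫ ξ in τ..t, β ξ * nu γ ξ with hZdef
  have hZd : ∀ t : ℝ, HasDerivAt Z (β t * nu γ t) t := by
    intro t
    have h1 : HasDerivAt (fun s => ∫ ξ in τ..s, β ξ * nu γ ξ) (β t * nu γ t) t :=
      intervalIntegral.integral_hasDerivAt_right ((hβc.mul hnucont).intervalIntegrable τ t)
        ((hβc.mul hnucont).stronglyMeasurableAtFilter volume (nhds t))
        (hβc.mul hnucont).continuousAt
    exact h1.const_add _
  have hZc : Continuous Z := continuous_iff_continuousAt.2 fun t => (hZd t).continuousAt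
  have hZτ : Z τ = h τ * nu γ τ := by simp [hZdef]
  -- main estimate: h t * ν t ≤ q * Z t for t ≥ τ
  have hwZ : ∀ t, τ ≤ t → h t * nu γ t ≤ q * Z t := by
    by_contra hcon
    push_neg at hcon
    obtain ⟨t₁, ht₁, hgt⟩ := hcon
    set S : Set ℝ := Icc τ t₁ ∩ {t | q * Z t ≤ h t * nu γ t} with hSdef
    have hScl : IsClosed S := by
      have hF : ContinuousOn (fun t => h t * nu γ t - q * Z t) (Icc τ t₁) :=
        ((hhc.mono (fun x hx => by
          simp only [mem_Icc] at hx; exact le_trans (neg_nonpos.2 hτ0) (le_trans hτ0 hx.1))).mul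
          hnucont.continuousOn).sub (hZc.continuousOn.const_smul q)
      have : S = Icc τ t₁ ∩ (fun t => h t * nu γ t - q * Z t) ⁻¹' (Ici 0) := by
        ext x; simp [hSdef, sub_nonneg]
      rw [this]
      exact hF.preimage_isClosed_of_isClosed isClosed_Icc isClosed_Ici
    have hSne : S.Nonempty := ⟨t₁, ⟨ht₁, le_rfl⟩, hgt.le⟩
    have hSbdd : BddBelow S := ⟨τ, fun x hx => hx.1.1⟩
    set t₀ : ℝ := sInf S with ht₀def
    have ht₀S : t₀ ∈ S := hScl.csInf_mem hSne hSbdd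
    have hτZ : h τ * nu γ τ < q * Z τ := by
      rw [hZτ]
      nlinarith [mul_pos hhτ (hnupos τ)]
    have hτt₀ : τ < t₀ := by
      rcases lt_or_eq_of_le ht₀S.1.1 with hlt | heq
      · exact hlt
      · exfalso; have := ht₀S.2; rw [← heq] at this; exact absurd this (not_le.2 hτZ)
    have hlt : ∀ x, τ ≤ x → x < t₀ → h x * nu γ x < q * Z x := by
      intro x hx1 hx2
      by_contra hle
      push_neg at hle
      exact absurd ⟨⟨hx1, le_trans hx2.le ht₀S.1.2⟩, hle⟩ (notMem_of_lt_csInf hx2 hSbdd)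
    have hle : h t₀ * nu γ t₀ ≤ q * Z t₀ - (q * Z τ - h τ * nu γ τ) := by
      refine image_le_of_deriv_right_le_deriv_boundary
        (f := fun t => h t * nu γ t)
        (f' := fun x => nu γ x * (α x * h (x - τ) ^ p + β x))
        (B := fun t => q * Z t - (q * Z τ - h τ * nu γ τ))
        (B' := fun x => q * (β x * nu γ x)) ?_ ?_ (by ring_nf; rfl) ?_ ?_ ?_
        (right_mem_Icc.2 hτt₀.le)
      · exact hwc.mono (fun x hx => le_trans (neg_nonpos.2 hτ0)
          (le_trans hτ0 hx.1))
      · intro x hx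
        exact (hwd x (le_trans hτ0 hx.1)).mono (Ici_subset_Ici.mpr (le_trans hτ0 hx.1))
      · exact ((hZc.continuousOn.const_smul q).sub continuousOn_const)
      · intro x hx
        exact (((hZd x).const_mul q).sub_const _).hasDerivWithinAt
      · intro x hx
        obtain ⟨hx1, hx2⟩ := hx
        have hx0 : 0 ≤ x := le_trans hτ0 hx1
        have hhx : 0 ≤ h x := hh0 x (by linarith)
        have hwx : h x * nu γ x < q * Z x := hlt x hx1 hx2
        have hζx : ζ x = Z x / nu γ x := hζ x hx1
        have hqζ : h x ≤ q * ζ x := by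
          rw [hζx, mul_div_assoc', le_div_iff₀ (hnupos x)]
          linarith
        have hqζ0 : 0 ≤ q * ζ x := le_trans hhx hqζ
        have hhd1 : h (x - τ) ≤ sig γ τ x * (q * ζ x) := by
          calc h (x - τ) ≤ sig γ τ x * h x := hστ x hx1
            _ ≤ sig γ τ x * (q * ζ x) :=
              mul_le_mul_of_nonneg_left hqζ (hsigpos x).le
        have hhd0 : 0 ≤ h (x - τ) := hh0 _ (by linarith)
        have hrp : h (x - τ) ^ p ≤ sig γ τ x ^ p * (q * ζ x) ^ p := by
          rw [← Real.mul_rpow (hsigpos x).le hqζ0]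
          exact Real.rpow_le_rpow hhd0 hhd1 (by linarith)
        have hα1 : α x * h (x - τ) ^ p ≤ (q - 1) * β x := by
          calc α x * h (x - τ) ^ p ≤ α x * (sig γ τ x ^ p * (q * ζ x) ^ p) :=
                mul_le_mul_of_nonneg_left hrp (hα x)
            _ = α x * sig γ τ x ^ p * (q * ζ x) ^ p := by ring
            _ ≤ (q - 1) * β x := hcond x hx1
        have : α x * h (x - τ) ^ p + β x ≤ q * β x := by linarith
        calc nu γ x * (α x * h (x - τ) ^ p + β x) ≤ nu γ x * (q * β x) :=
              mul_le_mul_of_nonneg_left this (hnupos x).le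
          _ = q * (β x * nu γ x) := by ring
    have hfin := ht₀S.2
    simp only [mem_setOf_eq] at hfin
    linarith
  -- Bound on [τ, ∞)
  obtain ⟨M, hMub⟩ := hM
  have hBν0 : (0:ℝ) ≤ ∫ ξ in Ici τ, β ξ * nu γ ξ :=
    setIntegral_nonneg measurableSet_Ici (fun x _ => mul_nonneg (hβ x) (hnupos x).le)
  set Zb : ℝ := h τ * nu γ τ + ∫ ξ in Ici τ, β ξ * nu γ ξ with hZbdef
  have hZle : ∀ t, τ ≤ t → Z t ≤ Zb := by
    intro t ht
    have h1 : (∫ ξ in τ..t, β ξ * nu γ ξ) = ∫ ξ in Ioc τ t, β ξ * nu γ ξ :=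
      intervalIntegral.integral_of_le ht
    have h2 : (∫ ξ in Ioc τ t, β ξ * nu γ ξ) ≤ ∫ ξ in Ici τ, β ξ * nu γ ξ := by
      refine setIntegral_mono_set hβν ?_ (HasSubset.Subset.eventuallyLE (fun x hx => le_of_lt hx.1))
      exact Eventually.of_forall (fun x => mul_nonneg (hβ x) (hnupos x).le)
    simp only [hZdef]
    rw [h1]
    linarith
  have hZ0 : ∀ t, τ ≤ t → 0 ≤ Z t := by
    intro t ht
    have := hwZ t ht
    nlinarith [mul_nonneg (hh0 t (by linarith)) (hnupos t).le]
  set E : ℝ := Real.exp ((∫ ξ in (0:ℝ)..τ, γ ξ) + M) with hEdef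
  have hνinv : ∀ t, τ ≤ t → (nu γ t)⁻¹ ≤ E := by
    intro t ht
    have hsplit : (∫ ξ in (0:ℝ)..τ, γ ξ) + ∫ ξ in τ..t, γ ξ
        = ∫ ξ in (0:ℝ)..t, γ ξ := intervalIntegral.integral_add_adjacent_intervals
      (hγc.intervalIntegrable 0 τ) (hγc.intervalIntegrable τ t)
    have hMt : (∫ ξ in τ..t, γ ξ) ≤ M := hMub ⟨t, ht, rfl⟩
    have : (nu γ t)⁻¹ = Real.exp (∫ ξ in (0:ℝ)..t, γ ξ) := by
      rw [nu, ← Real.exp_neg, neg_neg]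
    rw [this, hEdef]
    exact Real.exp_le_exp.2 (by linarith)
  have hBτ : ∀ t, τ ≤ t → h t ≤ q * Zb * E := by
    intro t ht
    have h1 : h t ≤ q * Z t * (nu γ t)⁻¹ := by
      rw [mul_comm (q * Z t) _, ← div_eq_inv_mul, le_div_iff₀ (hnupos t)]
      exact hwZ t ht
    have h2 : q * Z t * (nu γ t)⁻¹ ≤ q * Zb * E := by
      refine mul_le_mul (by nlinarith [hZle t ht, hZ0 t ht]) (hνinv t ht)
        (inv_nonneg.2 (hnupos t).le) (by nlinarith [hZ0 t ht, hZle t ht])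
    exact h1.trans h2
  -- Bound on [-τ, τ]
  obtain ⟨x2, hx2, hmax2⟩ := (isCompact_Icc : IsCompact (Icc (-τ) τ)).exists_isMaxOn
    (nonempty_Icc.2 (by linarith)) (hhc.mono Icc_subset_Ici_self)
  refine ⟨max (q * Zb * E) (h x2), ?_⟩
  intro t ht
  have hcomp := comp t ht
  rcases le_total t τ with hcase | hcase
  · exact le_trans hcomp (le_trans (hmax2 ⟨ht, hcase⟩) (le_max_right _ _))
  · exact le_trans hcomp (le_trans (hBτ t hcase) (le_max_left _ _))
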